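/- Let τ ∈ F be a CM point, Δ < 0 a discriminant, and 0 < ε < 1/4. Then the number C_ε(τ,Δ) of imaginary quadratic numbers z of discriminant Δ with |z − τ| < ε satisfies C_ε(τ,Δ) ≤ F·( (48+16√3)/3 · (σ₁(f̃)/f̃)·|Δ|^{1/2}ε² + (12+4√3)/3 · |Δ|^{1/2}ε + 8|Δ|^{1/4}/(√3−1)^{1/2} · σ₀(f̃)·ε + 2 ), where F = max{2^{ω(a)} : 1 ≤ a ≤ |Δ|^{1/2}}. -/

import Mathlib

/-- `z` is an imaginary quadratic number of discriminant `Δ` in the upper half plane: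
`z = (b + i√|Δ|)/(2a)` with `(a,b,c)` a primitive positive definite form of discriminant `Δ`. -/
def IsCMOfDisc (Δ : ℤ) (z : ℂ) : Prop :=
  ∃ a b c : ℤ, 0 < a ∧ Int.gcd (Int.gcd a b) c = 1 ∧ b ^ 2 - 4 * a * c = Δ ∧
    z = ((b : ℂ) + Complex.I * (Real.sqrt |(Δ : ℝ)| : ℝ)) / (2 * (a : ℂ))

/-- The (closed) standard fundamental domain for `SL₂(ℤ)` acting on the upper half plane. -/
def inFundDomain (z : ℂ) : Prop :=
  0 < z.im ∧ 1 ≤ ‖z‖ ∧ |z.re| ≤ 1 / 2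

/-- `F(Δ) = max {2^{ω(a)} : 1 ≤ a ≤ |Δ|^{1/2}}`. -/
def Fmax (Δ : ℤ) : ℕ :=
  Finset.sup (Finset.Icc 1 (Int.natAbs Δ).sqrt) fun a => 2 ^ a.primeFactors.card

/-- `D` is a fundamental discriminant. -/
def IsFundDisc (D : ℤ) : Prop :=
  (D % 4 = 1 ∧ Squarefree D) ∨
    (∃ m : ℤ, D = 4 * m ∧ (m % 4 = 2 ∨ m % 4 = 3) ∧ Squarefree m)

open Finset

/-- Count of integers in a real interval `[u,v]`. -/
lemma aux_card_int_interval (I : Finset ℤ) (u v : ℝ)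
    (h : ∀ b ∈ I, u ≤ (b : ℝ) ∧ (b : ℝ) ≤ v) (huv : u ≤ v) :
    (I.card : ℝ) ≤ v - u + 1 := by
  have hsub : I ⊆ Finset.Icc ⌈u⌉ ⌊v⌋ := by
    intro b hb
    obtain ⟨h1, h2⟩ := h b hb
    exact Finset.mem_Icc.mpr ⟨Int.ceil_le.mpr h1, Int.le_floor.mpr h2⟩
  have hcard : I.card ≤ (Finset.Icc ⌈u⌉ ⌊v⌋).card := Finset.card_le_card hsub
  have : ((Finset.Icc ⌈u⌉ ⌊v⌋).card : ℝ) ≤ v - u + 1 := by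
    rw [Int.card_Icc]
    rcases le_or_gt ⌈u⌉ (⌊v⌋ + 1) with hle | hlt
    · have h0 : ((⌊v⌋ + 1 - ⌈u⌉).toNat : ℤ) = ⌊v⌋ + 1 - ⌈u⌉ := Int.toNat_of_nonneg (by omega)
      have : ((⌊v⌋ + 1 - ⌈u⌉).toNat : ℝ) = ((⌊v⌋ : ℝ) + 1 - ⌈u⌉) := by
        exact_mod_cast congrArg (fun x : ℤ => (x : ℝ)) h0
      rw [this]
      have h1 : (⌊v⌋ : ℝ) ≤ v := Int.floor_le v
      have h2 : u ≤ (⌈u⌉ : ℝ) := Int.le_ceil u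
      linarith
    · have : (⌊v⌋ + 1 - ⌈u⌉).toNat = 0 := by omega
      rw [this]
      push_cast
      linarith
  calc (I.card : ℝ) ≤ _ := by exact_mod_cast hcard
    _ ≤ v - u + 1 := this

/-- Count of integers in `[u,v]` lying in a fixed residue class mod `m`. -/
lemma aux_card_int_ap (I : Finset ℤ) (u v : ℝ) (m : ℕ) (hm : 0 < m) (r : ℤ)
    (h : ∀ b ∈ I, u ≤ (b : ℝ) ∧ (b : ℝ) ≤ v ∧ (m : ℤ) ∣ (b - r)) (huv : u ≤ v) :
    (I.card : ℝ) ≤ (v - u) / m + 1 := by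
  have hm' : (0 : ℝ) < m := by exact_mod_cast hm
  have hmz : (m : ℤ) ≠ 0 := by exact_mod_cast hm.ne'
  have hinj : Set.InjOn (fun b : ℤ => (b - r) / m) I := by
    intro b hb b' hb' hbb
    obtain ⟨-, -, k, hk⟩ := h b hb
    obtain ⟨-, -, k', hk'⟩ := h b' hb'
    simp only at hbb
    rw [hk, hk', Int.mul_ediv_cancel_left _ hmz, Int.mul_ediv_cancel_left _ hmz] at hbb
    rw [hbb] at hk
    omega
  have hcard : I.card = (I.image (fun b : ℤ => (b - r) / m)).card :=
    (Finset.card_image_of_injOn hinj).symm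
  rw [hcard]
  have := aux_card_int_interval (I.image (fun b : ℤ => (b - r) / m))
      ((u - r) / m) ((v - r) / m) ?_ (by
        apply div_le_div_of_nonneg_right ?_ hm'.le; linarith)
  · calc _ ≤ (v - r)/m - (u - r)/m + 1 := this
      _ = (v - u)/m + 1 := by ring
  · intro k hk
    obtain ⟨b, hb, hbk⟩ := Finset.mem_image.mp hk
    obtain ⟨h1, h2, kk, hkk⟩ := h b hb
    have : (b - r) / (m : ℤ) = kk := by rw [hkk, Int.mul_ediv_cancel_left _ hmz]
    subst hbk
    rw [this]
    have hb' : (b : ℝ) = r + m * kk := by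
      have : (b : ℤ) = r + m * kk := by omega
      exact_mod_cast congrArg (fun x : ℤ => (x : ℝ)) this
    constructor
    · rw [div_le_iff₀ hm']
      nlinarith
    · rw [le_div_iff₀ hm']
      nlinarith

/-- Product of powers of distinct primes divides an integer if each power does. -/
lemma aux_prod_pow_dvd_int (s : Finset ℕ) (hs : ∀ p ∈ s, p.Prime) (γ : ℕ → ℕ) (n : ℤ)
    (h : ∀ p ∈ s, ((p : ℤ)) ^ (γ p) ∣ n) :
    (∏ p ∈ s, (p : ℤ) ^ (γ p)) ∣ n := by
  induction s using Finset.cons_induction with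
  | empty => simpa using one_dvd n
  | cons p s hp ih =>
    rw [Finset.prod_cons]
    have hpp := hs p (Finset.mem_cons_self p s)
    have hcop : IsCoprime ((p : ℤ) ^ γ p) (∏ q ∈ s, (q : ℤ) ^ γ q) := by
      apply IsCoprime.pow_left
      apply IsCoprime.prod_right
      intro q hq
      apply IsCoprime.pow_right
      rw [Int.isCoprime_iff_gcd_eq_one]
      have hqq := hs q (Finset.mem_cons_of_mem hq)
      have hne : p ≠ q := by rintro rfl; exact hp hq
      simpa [Int.gcd_natCast_natCast] using (Nat.coprime_primes hpp hqq).mpr hne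
    exact hcop.mul_dvd (h p (Finset.mem_cons_self p s))
      (ih (fun q hq => hs q (Finset.mem_cons_of_mem hq))
        (fun q hq => h q (Finset.mem_cons_of_mem hq)))

/-- Product of powers of distinct primes divides a natural if each power does. -/
lemma aux_prod_pow_dvd_nat (s : Finset ℕ) (hs : ∀ p ∈ s, p.Prime) (γ : ℕ → ℕ) (n : ℕ)
    (h : ∀ p ∈ s, p ^ (γ p) ∣ n) :
    (∏ p ∈ s, p ^ (γ p)) ∣ n := by
  induction s using Finset.cons_induction with
  | empty => simpa using one_dvd n
  | cons p s hp ih =>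
    rw [Finset.prod_cons]
    have hpp := hs p (Finset.mem_cons_self p s)
    have hcop : Nat.Coprime (p ^ γ p) (∏ q ∈ s, q ^ γ q) := by
      apply Nat.Coprime.pow_left
      apply Nat.Coprime.prod_right
      intro q hq
      apply Nat.Coprime.pow_right
      have hqq := hs q (Finset.mem_cons_of_mem hq)
      have hne : p ≠ q := by rintro rfl; exact hp hq
      exact (Nat.coprime_primes hpp hqq).mpr hne
    exact hcop.mul_dvd_of_dvd_of_dvd (h p (Finset.mem_cons_self p s))
      (ih (fun q hq => hs q (Finset.mem_cons_of_mem hq))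
        (fun q hq => h q (Finset.mem_cons_of_mem hq)))


lemma aux_pow_dvd_int_iff (p k : ℕ) (n : ℤ) : (p:ℤ)^k ∣ n ↔ p^k ∣ n.natAbs := by
  rw [← Int.natAbs_dvd_natAbs]
  simp [Int.natAbs_pow]

/-- sign splitting for square roots mod p^e -/
lemma aux_sign_split {p : ℕ} (hp : p.Prime) (e : ℕ) (x y : ℤ) (hx : x ≠ 0)
    (hdvd : (p:ℤ)^e ∣ (y - x) * (y + x)) :
    (p:ℤ)^(e - min (((2*x).natAbs).factorization p) (e/2)) ∣ (y - x) ∨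
      (p:ℤ)^(e - min (((2*x).natAbs).factorization p) (e/2)) ∣ (y + x) := by
  set u := ((2*x).natAbs).factorization p with hu
  set c := e - min u (e/2) with hc
  by_cases h1 : y - x = 0
  · exact Or.inl (h1 ▸ dvd_zero _)
  by_cases h2 : y + x = 0
  · exact Or.inr (h2 ▸ dvd_zero _)
  set i := ((y - x).natAbs).factorization p with hi
  set j := ((y + x).natAbs).factorization p with hj
  have h2x : (2 : ℤ) * x ≠ 0 := by simpa using hx
  have hie : (p:ℤ)^i ∣ y - x := by
    rw [aux_pow_dvd_int_iff]
    exact Nat.ordProj_dvd _ _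
  have hje : (p:ℤ)^j ∣ y + x := by
    rw [aux_pow_dvd_int_iff]
    exact Nat.ordProj_dvd _ _
  have hij : e ≤ i + j := by
    have hprod : p^e ∣ ((y - x).natAbs * (y + x).natAbs) := by
      rw [← Int.natAbs_mul, ← aux_pow_dvd_int_iff]
      exact hdvd
    have hne : (y - x).natAbs * (y + x).natAbs ≠ 0 := by
      simp [Int.natAbs_ne_zero, h1, h2]
    have := (Nat.Prime.pow_dvd_iff_le_factorization hp hne).mp hprod
    rwa [Nat.factorization_mul (Int.natAbs_ne_zero.mpr h1) (Int.natAbs_ne_zero.mpr h2),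
      Finsupp.add_apply] at this
  have hmin : min i j ≤ u := by
    have hdd : (p:ℤ)^(min i j) ∣ 2*x := by
      have d1 : (p:ℤ)^(min i j) ∣ y + x := dvd_trans (pow_dvd_pow _ (min_le_right i j)) hje
      have d2 : (p:ℤ)^(min i j) ∣ y - x := dvd_trans (pow_dvd_pow _ (min_le_left i j)) hie
      have : (2:ℤ)*x = (y + x) - (y - x) := by ring
      rw [this]
      exact dvd_sub d1 d2
    rw [aux_pow_dvd_int_iff] at hdd
    exact (Nat.Prime.pow_dvd_iff_le_factorization hp (Int.natAbs_ne_zero.mpr h2x)).mp hdd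
  rcases le_total i j with hle | hle
  · right
    exact dvd_trans (pow_dvd_pow _ (by omega)) hje
  · left
    exact dvd_trans (pow_dvd_pow _ (by omega)) hie

/-- the key valuation bound: `min (v_p b₀) (e/2) ≤ v_p f̃`. -/
lemma aux_key (Δ D : ℤ) (f ftilde : ℕ) (hf : 0 < f) (hΔneg : Δ < 0)
    (hfact : Δ = (f : ℤ) ^ 2 * D) (hD : IsFundDisc D)
    (hft1 : D % 4 = 1 → ftilde = f) (hft0 : D % 4 = 0 → ftilde = 2 * f)
    (p : ℕ) (hp : p.Prime) (e : ℕ) (b₀ : ℤ) (hb₀ : b₀ ≠ 0)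
    (hdvd : (p:ℤ)^e ∣ b₀^2 - Δ) :
    min ((b₀.natAbs).factorization p) (e/2) ≤ ftilde.factorization p := by
  have hΔ0 : Δ ≠ 0 := hΔneg.ne
  have hD0 : D ≠ 0 := by
    rintro rfl
    rw [mul_zero] at hfact
    omega
  have hDnat0 : D.natAbs ≠ 0 := Int.natAbs_ne_zero.mpr hD0
  have hΔnat : Δ.natAbs = f^2 * D.natAbs := by
    rw [hfact, Int.natAbs_mul, Int.natAbs_pow]
    simp
  have hΔnat0 : Δ.natAbs ≠ 0 := Int.natAbs_ne_zero.mpr hΔ0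
  set w := (b₀.natAbs).factorization p with hw
  set vf := f.factorization p with hvf
  set vD := (D.natAbs).factorization p with hvD
  set vft := ftilde.factorization p with hvft
  have hvΔ : Δ.natAbs.factorization p = 2*vf + vD := by
    rw [hΔnat, Nat.factorization_mul (pow_ne_zero _ hf.ne') hDnat0, Nat.factorization_pow]
    simp [hvf, hvD, mul_comm]
  -- D mod 4 is 0 or 1
  have hD4 : D % 4 = 1 ∨ D % 4 = 0 := by
    rcases hD with ⟨h, -⟩ | ⟨m, rfl, -, -⟩
    · exact Or.inl h
    · right; omega
  -- f divides ftilde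
  have hft_pos : ftilde ≠ 0 := by
    rcases hD4 with h | h
    · rw [hft1 h]; omega
    · rw [hft0 h]; omega
  have hvf_le : vf ≤ vft := by
    have hfd : f ∣ ftilde := by
      rcases hD4 with h | h
      · rw [hft1 h]
      · rw [hft0 h]; exact Dvd.intro_left 2 rfl
    rw [hvf, hvft]
    exact (Nat.factorization_le_iff_dvd hf.ne' hft_pos).mpr hfd p
  -- facts about vD
  have hvD_odd : p ≠ 2 → vD ≤ 1 := by
    intro hp2
    rcases hD with ⟨-, hsqf⟩ | ⟨m, rfl, -, hsqfm⟩
    · exact (Nat.squarefree_iff_factorization_le_one hDnat0).mp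
        (Int.squarefree_natAbs.mpr hsqf) p
    · have hm0 : m ≠ 0 := by
        intro h; rw [h] at hD0; simp at hD0
      have : (4*m).natAbs = 4 * m.natAbs := by
        rw [Int.natAbs_mul]; rfl
      rw [hvD, this, Nat.factorization_mul (by norm_num) (Int.natAbs_ne_zero.mpr hm0)]
      have h4 : (4:ℕ).factorization p = 0 := by
        have : (4:ℕ) = 2^2 := by norm_num
        rw [this, Nat.factorization_pow, Nat.Prime.factorization Nat.prime_two]
        simp [Finsupp.single_apply, (Ne.symm hp2)]
      rw [Finsupp.add_apply, h4]
      simpa using (Nat.squarefree_iff_factorization_le_one (Int.natAbs_ne_zero.mpr hm0)).mp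
        (Int.squarefree_natAbs.mpr hsqfm) p
  -- p = 2 facts
  have hvD0' : p = 2 → D % 4 = 1 → vD = 0 := by
    rintro rfl h41
    apply Nat.factorization_eq_zero_of_not_dvd
    intro hdvd2
    have : (2:ℤ) ∣ D := by
      have h2 : ((2:ℤ)).natAbs ∣ D.natAbs := by simpa using hdvd2
      exact Int.natAbs_dvd_natAbs.mp h2
    omega
  have hvD3' : p = 2 → D % 4 = 0 → vD ≤ 3 := by
    rintro rfl h40
    rcases hD with ⟨h41, -⟩ | ⟨m, rfl, -, hsqfm⟩
    · omega
    · have hm0 : m ≠ 0 := by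
        intro h; rw [h] at hD0; simp at hD0
      have hnm : (4*m).natAbs = 4 * m.natAbs := by
        rw [Int.natAbs_mul]; rfl
      rw [hvD, hnm, Nat.factorization_mul (by norm_num) (Int.natAbs_ne_zero.mpr hm0),
        Finsupp.add_apply]
      have h4 : (4:ℕ).factorization 2 = 2 := by
        have : (4:ℕ) = 2^2 := by norm_num
        rw [this, Nat.factorization_pow, Nat.Prime.factorization Nat.prime_two]
        simp
      rw [h4]
      have := (Nat.squarefree_iff_factorization_le_one (Int.natAbs_ne_zero.mpr hm0)).mp
        (Int.squarefree_natAbs.mpr hsqfm) 2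
      omega
  have hvft1 : p = 2 → D % 4 = 0 → vft = vf + 1 := by
    rintro rfl h40
    rw [hvft, hft0 h40, Nat.factorization_mul two_ne_zero hf.ne', Finsupp.add_apply,
      Nat.Prime.factorization Nat.prime_two]
    simp [hvf, add_comm]
  have hvftf : D % 4 = 1 → vft = vf := by
    intro h41
    rw [hvft, hft1 h41, hvf]
  -- the two main cases
  have hb20 : b₀.natAbs ≠ 0 := Int.natAbs_ne_zero.mpr hb₀
  have hb2sq0 : (b₀^2).natAbs ≠ 0 := by
    rw [Int.natAbs_pow]
    positivity
  have hvb2 : (b₀^2).natAbs.factorization p = 2*w := by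
    rw [Int.natAbs_pow, Nat.factorization_pow]
    simp [hw, mul_comm]
  have hpow_b2 : (p:ℤ)^(2*w) ∣ b₀^2 := by
    rw [aux_pow_dvd_int_iff, ← hvb2]
    exact Nat.ordProj_dvd _ _
  have hmain : (2*vf + vD = 2*w) ∨ (e ≤ 2*vf + vD) := by
    by_cases h2w : 2*w < e
    · left
      have hnot : ¬ (p:ℤ)^(2*w+1) ∣ b₀^2 := by
        rw [aux_pow_dvd_int_iff]
        rw [← hvb2] at *
        exact Nat.pow_succ_factorization_not_dvd hb2sq0 hp
      have hdvd' : (p:ℤ)^(2*w) ∣ b₀^2 - Δ := (pow_dvd_pow _ (by omega)).trans hdvd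
      have hΔdvd : (p:ℤ)^(2*w) ∣ Δ := by
        have := dvd_sub hpow_b2 hdvd'
        simpa using this
      have hΔnotdvd : ¬ (p:ℤ)^(2*w+1) ∣ Δ := by
        intro h
        have hd1 : (p:ℤ)^(2*w+1) ∣ b₀^2 - Δ := (pow_dvd_pow _ (by omega)).trans hdvd
        exact hnot (by simpa using dvd_add hd1 h)
      have hle1 : 2*w ≤ Δ.natAbs.factorization p :=
        (Nat.Prime.pow_dvd_iff_le_factorization hp hΔnat0).mp ((aux_pow_dvd_int_iff _ _ _).mp hΔdvd)
      have hle2 : Δ.natAbs.factorization p ≤ 2*w := by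
        by_contra hcon
        exact hΔnotdvd ((aux_pow_dvd_int_iff _ _ _).mpr
          ((Nat.Prime.pow_dvd_iff_le_factorization hp hΔnat0).mpr (by omega)))
      omega
    · right
      have hpe_b2 : (p:ℤ)^e ∣ b₀^2 := (pow_dvd_pow _ (by omega)).trans hpow_b2
      have hΔdvd : (p:ℤ)^e ∣ Δ := by
        have := dvd_sub hpe_b2 hdvd
        simpa using this
      have := (Nat.Prime.pow_dvd_iff_le_factorization hp hΔnat0).mp
        ((aux_pow_dvd_int_iff _ _ _).mp hΔdvd)
      omega
  rcases eq_or_ne p 2 with rfl | hp2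
  · rcases hD4 with h41 | h40
    · have e1 := hvD0' rfl h41
      have e2 := hvftf h41
      rcases hmain with h | h <;> omega
    · have e1 := hvD3' rfl h40
      have e2 := hvft1 rfl h40
      rcases hmain with h | h <;> omega
  · have e1 := hvD_odd hp2
    rcases hmain with h | h <;> omega

lemma aux_nat_le_floor_add_one (k : ℕ) (x : ℝ) (hx : (k:ℝ) ≤ x + 1) : k ≤ ⌊x⌋₊ + 1 := by
  rcases Nat.eq_zero_or_pos k with rfl | hk
  · omega
  · have : ((k - 1 : ℕ) : ℝ) ≤ x := by
      push_cast [Nat.cast_sub hk]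
      linarith
    have := Nat.le_floor this
    omega

lemma aux_row (Δ D : ℤ) (f ftilde : ℕ) (hf : 0 < f) (hΔneg : Δ < 0)
    (hfact : Δ = (f : ℤ) ^ 2 * D) (hD : IsFundDisc D)
    (hft1 : D % 4 = 1 → ftilde = f) (hft0 : D % 4 = 0 → ftilde = 2 * f)
    (hftpos : 0 < ftilde)
    (na : ℕ) (hna : 0 < na) (lo hi : ℝ) (hlohi : lo ≤ hi)
    (row : Finset ℤ)
    (hrow : ∀ b ∈ row, lo ≤ (b:ℝ) ∧ (b:ℝ) ≤ hi ∧ (4*(na:ℤ)) ∣ b^2 - Δ) :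
    ∃ g : ℕ, 0 < g ∧ g ∣ ftilde ∧ g^2 ∣ 4*na ∧
      (row.card : ℝ) ≤ 2^((4*na).primeFactors.card) *
        ((hi - lo) * (2*g) / (4*na) + 1) := by
  classical
  set q : ℕ := 4*na with hq
  have hq0 : q ≠ 0 := by omega
  have hq0' : 0 < q := by omega
  set s : Finset ℕ := q.primeFactors with hs
  have hsprime : ∀ p ∈ s, p.Prime := fun p hp => Nat.prime_of_mem_primeFactors hp
  -- trivial case: row with at most the element 0
  by_cases hrow0 : ∀ b ∈ row, b = (0:ℤ)
  · refine ⟨1, one_pos, one_dvd _, one_dvd _, ?_⟩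
    have hcard : row.card ≤ 1 := Finset.card_le_one.mpr (by
      intro a ha b hb; rw [hrow0 a ha, hrow0 b hb])
    have hhl : (0:ℝ) ≤ hi - lo := by linarith
    have h1 : (1:ℝ) ≤ 2^(s.card) * ((hi - lo) * (2*((1:ℕ):ℝ)) / (4*(na:ℝ)) + 1) := by
      have h2 : (0:ℝ) ≤ (hi - lo) * (2*((1:ℕ):ℝ)) / (4*(na:ℝ)) := by
        apply div_nonneg (by push_cast; linarith) (by positivity)
      have h3 : (1:ℝ) ≤ 2^(s.card) := one_le_pow₀ (by norm_num)
      nlinarith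
    calc (row.card : ℝ) ≤ 1 := by exact_mod_cast hcard
      _ ≤ _ := h1
  · push_neg at hrow0
    obtain ⟨b₀, hb₀row, hb₀⟩ := hrow0
    set e : ℕ → ℕ := fun p => q.factorization p with he
    set u : ℕ → ℕ := fun p => ((2*b₀).natAbs).factorization p with huu
    set c : ℕ → ℕ := fun p => e p - min (u p) (e p / 2) with hc
    set γ : ℕ → ℕ := fun p => min (e p / 2) (ftilde.factorization p) with hγ
    set M : ℕ := ∏ p ∈ s, p ^ c p with hM
    set g : ℕ := ∏ p ∈ s, p ^ γ p with hg
    have hM0 : 0 < M := Finset.prod_pos (fun p hp => pow_pos (hsprime p hp).pos _)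
    have hg0 : 0 < g := Finset.prod_pos (fun p hp => pow_pos (hsprime p hp).pos _)
    -- q as a product over its prime factors
    have hqprod : q = ∏ p ∈ s, p ^ e p := by
      conv_lhs => rw [← Nat.factorization_prod_pow_eq_self hq0]
      rw [Finsupp.prod]
      apply Finset.prod_congr
      · rw [Nat.support_factorization]
      · intros; rfl
    -- g ∣ ftilde
    have hgft : g ∣ ftilde := by
      apply aux_prod_pow_dvd_nat s hsprime γ ftilde
      intro p hp
      exact (Nat.Prime.pow_dvd_iff_le_factorization (hsprime p hp) hftpos.ne').mpr
        (min_le_right _ _)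
    -- g^2 ∣ q
    have hg2q : g^2 ∣ q := by
      rw [hqprod, hg, ← Finset.prod_pow]
      apply Finset.prod_dvd_prod_of_dvd
      intro p hp
      rw [← pow_mul]
      apply pow_dvd_pow
      have : γ p ≤ e p / 2 := min_le_left _ _
      omega
    -- key divisibility per prime
    have hpe_dvd_q : ∀ p ∈ s, (p:ℤ)^(e p) ∣ (q:ℤ) := by
      intro p hp
      have : p^(e p) ∣ q := Nat.ordProj_dvd _ _
      exact_mod_cast Int.natCast_dvd_natCast.mpr this
    have hqz : (q:ℤ) = 4*(na:ℤ) := by rw [hq]; push_cast; ring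
    have hb₀dvd : (q:ℤ) ∣ b₀^2 - Δ := by
      rw [hqz]; exact (hrow b₀ hb₀row).2.2
    -- q ∣ 2 * g * M
    have hq2gM : q ∣ 2 * g * M := by
      have h2s : 2 ∈ s := Nat.mem_primeFactors.mpr ⟨Nat.prime_two, ⟨2*na, by omega⟩, hq0⟩
      have hprod2 : (∏ p ∈ s, p ^ (if p = 2 then 1 else 0)) = 2 := by
        have : ∀ p ∈ s, p ^ (if p = 2 then 1 else 0) = (if p = 2 then p else 1) := by
          intro p hp; split <;> simp
        rw [Finset.prod_congr rfl this, Finset.prod_ite_eq' s 2 (fun p => p), if_pos h2s]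
      have hkey : ∀ p ∈ s, e p ≤ (if p = 2 then 1 else 0) + γ p + c p := by
        intro p hp
        have hkp := aux_key Δ D f ftilde hf hΔneg hfact hD hft1 hft0 p (hsprime p hp)
          (e p) b₀ hb₀ ((hpe_dvd_q p hp).trans hb₀dvd)
        have h2b : (2*b₀).natAbs = 2 * b₀.natAbs := by
          rw [Int.natAbs_mul]; rfl
        have hup : u p = (Nat.factorization 2) p + (b₀.natAbs).factorization p := by
          rw [huu]
          simp only
          rw [h2b, Nat.factorization_mul two_ne_zero (Int.natAbs_ne_zero.mpr hb₀)]
          simp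
        rw [Nat.Prime.factorization Nat.prime_two, Finsupp.single_apply] at hup
        by_cases hp2 : p = 2
        · subst hp2
          have hcp : c 2 = e 2 - min (u 2) (e 2 / 2) := rfl
          have hγp : γ 2 = min (e 2 / 2) (ftilde.factorization 2) := rfl
          simp only [if_pos rfl] at hup ⊢
          omega
        · have hcp : c p = e p - min (u p) (e p / 2) := rfl
          have hγp : γ p = min (e p / 2) (ftilde.factorization p) := rfl
          simp only [if_neg hp2, if_neg (Ne.symm hp2 : ¬ (2:ℕ) = p)] at hup ⊢
          omega
      have hsplit : (∏ p ∈ s, p ^ ((if p = 2 then 1 else 0) + γ p + c p)) =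
          (∏ p ∈ s, p ^ (if p = 2 then 1 else 0)) * ((∏ p ∈ s, p ^ γ p) * (∏ p ∈ s, p ^ c p)) := by
        rw [← Finset.prod_mul_distrib, ← Finset.prod_mul_distrib]
        exact Finset.prod_congr rfl (fun p _ => by rw [pow_add, pow_add, mul_assoc])
      calc q = ∏ p ∈ s, p ^ e p := hqprod
        _ ∣ ∏ p ∈ s, p ^ ((if p = 2 then 1 else 0) + γ p + c p) :=
          Finset.prod_dvd_prod_of_dvd _ _ (fun p hp => pow_dvd_pow p (hkey p hp))
        _ = 2 * g * M := by
          rw [hsplit, hprod2, hM, hg, mul_assoc]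
      -- the sign-vector map
    set φ : ℤ → Finset ℕ := fun b => s.filter (fun p => (p:ℤ)^(c p) ∣ (b - b₀)) with hφ
    have hsign : ∀ b ∈ row, ∀ p ∈ s, (p:ℤ)^(c p) ∣ (b - b₀) ∨ (p:ℤ)^(c p) ∣ (b + b₀) := by
      intro b hb p hp
      have hd : (p:ℤ)^(e p) ∣ (b - b₀) * (b + b₀) := by
        have h1 : (q:ℤ) ∣ (b^2 - Δ) - (b₀^2 - Δ) := dvd_sub (by
            rw [hqz]; exact (hrow b hb).2.2) hb₀dvd
        have h2 : (b - b₀) * (b + b₀) = (b^2 - Δ) - (b₀^2 - Δ) := by ring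
        rw [h2]
        exact (hpe_dvd_q p hp).trans h1
      exact aux_sign_split (hsprime p hp) (e p) b₀ b hb₀ hd
    have hfib : ∀ b ∈ row, ∀ b' ∈ row, φ b = φ b' → (M:ℤ) ∣ b - b' := by
      intro b hb b' hb' hφeq
      have hMcast : ((M:ℕ):ℤ) = ∏ p ∈ s, (p:ℤ)^(c p) := by
        rw [hM]; push_cast; rfl
      rw [hMcast]
      apply aux_prod_pow_dvd_int s hsprime c
      intro p hp
      by_cases hmem : p ∈ φ b
      · have hmem' : p ∈ φ b' := hφeq ▸ hmem
        rw [hφ] at hmem hmem'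
        simp only [Finset.mem_filter] at hmem hmem'
        have : b - b' = (b - b₀) - (b' - b₀) := by ring
        rw [this]
        exact dvd_sub hmem.2 hmem'.2
      · have hmem' : p ∉ φ b' := hφeq ▸ hmem
        rw [hφ] at hmem hmem'
        simp only [Finset.mem_filter] at hmem hmem'
        have hdb : (p:ℤ)^(c p) ∣ (b + b₀) := by
          rcases hsign b hb p hp with h | h
          · exact absurd ⟨hp, h⟩ hmem
          · exact h
        have hdb' : (p:ℤ)^(c p) ∣ (b' + b₀) := by
          rcases hsign b' hb' p hp with h | h
          · exact absurd ⟨hp, h⟩ hmem'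
          · exact h
        have : b - b' = (b + b₀) - (b' + b₀) := by ring
        rw [this]
        exact dvd_sub hdb hdb'
    -- counting
    set n : ℕ := ⌊(hi - lo)/(M:ℝ)⌋₊ + 1 with hn
    have hcount : row.card ≤ n * 2^(s.card) := by
      have himg : (row.image φ).card ≤ 2^(s.card) := by
        have hsub : row.image φ ⊆ s.powerset := by
          intro v hv
          obtain ⟨b, hb, rfl⟩ := Finset.mem_image.mp hv
          exact Finset.mem_powerset.mpr (Finset.filter_subset _ _)
        calc (row.image φ).card ≤ s.powerset.card := Finset.card_le_card hsub
          _ = 2^(s.card) := Finset.card_powerset s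
      have hfibcard : ∀ v ∈ row.image φ, (row.filter (fun b => φ b = v)).card ≤ n := by
        intro v hv
        obtain ⟨b1, hb1, hb1v⟩ := Finset.mem_image.mp hv
        set F := row.filter (fun b => φ b = v) with hF
        have hne : F.Nonempty := ⟨b1, Finset.mem_filter.mpr ⟨hb1, hb1v⟩⟩
        set r := F.min' hne with hr
        have hrF := F.min'_mem hne
        have hrrow : r ∈ row := (Finset.mem_filter.mp hrF).1
        have hbound : (F.card : ℝ) ≤ (hi - lo)/(M:ℝ) + 1 := by
          apply aux_card_int_ap F lo hi M hM0 r
          · intro b hb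
            have hbrow := (Finset.mem_filter.mp hb).1
            refine ⟨(hrow b hbrow).1, (hrow b hbrow).2.1, ?_⟩
            exact hfib b hbrow r hrrow
              (((Finset.mem_filter.mp hb).2).trans ((Finset.mem_filter.mp hrF).2).symm)
          · exact hlohi
        exact aux_nat_le_floor_add_one _ _ hbound
      calc row.card ≤ n * (row.image φ).card :=
          Finset.card_le_mul_card_image row n hfibcard
        _ ≤ n * 2^(s.card) := Nat.mul_le_mul_left n himg
    refine ⟨g, hg0, hgft, hg2q, ?_⟩
    have hq2gM' : (q:ℝ) ≤ 2 * g * M := by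
      have := Nat.le_of_dvd (by positivity) hq2gM
      exact_mod_cast this
    have hMq : (1:ℝ)/(M:ℝ) ≤ 2*(g:ℝ)/(q:ℝ) := by
      rw [div_le_div_iff₀ (by exact_mod_cast hM0) (by exact_mod_cast hq0')]
      calc (1:ℝ) * q = q := one_mul _
        _ ≤ 2*g*M := hq2gM'
        _ = 2*(g:ℝ)*(M:ℝ) := by push_cast; ring
    have hhl : (0:ℝ) ≤ hi - lo := by linarith
    have hfloor : ((n:ℕ):ℝ) ≤ (hi - lo)/(M:ℝ) + 1 := by
      rw [hn]
      push_cast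
      have := Nat.floor_le (div_nonneg hhl (by positivity) : (0:ℝ) ≤ (hi - lo)/(M:ℝ))
      linarith
    have hqr : ((q:ℕ):ℝ) = 4*(na:ℝ) := by rw [hq]; push_cast; ring
    calc (row.card : ℝ) ≤ (n:ℝ) * 2^(s.card) := by exact_mod_cast hcount
      _ ≤ ((hi - lo)/(M:ℝ) + 1) * 2^(s.card) := by
          apply mul_le_mul_of_nonneg_right hfloor (by positivity)
      _ ≤ ((hi - lo) * (2*(g:ℝ))/(4*(na:ℝ)) + 1) * 2^(s.card) := by
          apply mul_le_mul_of_nonneg_right ?_ (by positivity)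
          have h1 : (hi - lo)/(M:ℝ) = (hi - lo) * (1/(M:ℝ)) := by ring
          have h2 : (hi - lo) * (2*(g:ℝ))/(4*(na:ℝ)) = (hi - lo) * (2*(g:ℝ)/(q:ℝ)) := by
            rw [← hqr]; ring
          rw [h1, h2]
          have := mul_le_mul_of_nonneg_left hMq hhl
          linarith
      _ = 2^(s.card) * ((hi - lo) * (2*(g:ℝ)) / (4*(na:ℝ)) + 1) := mul_comm _ _

lemma aux_div4 (d n : ℕ) (h : d^2 ∣ 4*n) : (d^2 / Nat.gcd (d^2) 4) ∣ n := by
  set h4 := Nat.gcd (d^2) 4 with hh4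
  have hpos : 0 < h4 := Nat.gcd_pos_of_pos_right _ (by norm_num)
  have hd2 : h4 ∣ d^2 := Nat.gcd_dvd_left _ _
  have h44 : h4 ∣ 4 := Nat.gcd_dvd_right _ _
  have hcop : Nat.Coprime (d^2 / h4) (4 / h4) := by
    rcases Nat.eq_zero_or_pos d with rfl | hd
    · simp [hh4]
    · exact Nat.coprime_div_gcd_div_gcd hpos
  have hdvd : (d^2 / h4) ∣ (4 / h4) * n := by
    have : d^2 ∣ h4 * ((4 / h4) * n) := by
      rw [← mul_assoc, Nat.mul_div_cancel' h44]
      exact h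
    rcases hd2 with ⟨k, hk⟩
    rcases this with ⟨l, hl⟩
    rw [hk] at hl ⊢
    rw [Nat.mul_div_cancel_left k hpos]
    have := Nat.eq_of_mul_eq_mul_left hpos (by linarith [hl] : h4 * ((4/h4)*n) = h4 * (k * l))
    exact ⟨l, this⟩
  exact (Nat.Coprime.dvd_of_dvd_mul_left hcop hdvd)

lemma aux_sum_inv_divisors (n : ℕ) (hn : n ≠ 0) :
    ∑ d ∈ n.divisors, (1:ℝ)/d = ((ArithmeticFunction.sigma 1) n : ℝ)/n := by
  have h1 : ∑ d ∈ n.divisors, (1:ℝ)/d = ∑ d ∈ n.divisors, (1:ℝ)/((n/d : ℕ):ℝ) :=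
    (Nat.sum_div_divisors n (fun d => (1:ℝ)/d)).symm
  rw [h1, ArithmeticFunction.sigma_one_apply]
  push_cast
  rw [Finset.sum_div]
  apply Finset.sum_congr rfl
  intro d hd
  have hdn : d ∣ n := (Nat.mem_divisors.mp hd).1
  have hd0 : d ≠ 0 := by
    rintro rfl
    exact hn (zero_dvd_iff.mp hdn)
  rw [Nat.cast_div hdn (by exact_mod_cast hd0), one_div_div]

lemma aux_pf4 (n : ℕ) (hn : n ≠ 0) :
    (4*n).primeFactors.card ≤ 1 + n.primeFactors.card := by
  rw [Nat.primeFactors_mul (by norm_num) hn]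
  have h4 : (4:ℕ).primeFactors = {2} := by
    have : (4:ℕ) = 2^2 := by norm_num
    rw [this, Nat.primeFactors_pow _ (by norm_num), Nat.Prime.primeFactors Nat.prime_two]
  rw [h4]
  calc ({2} ∪ n.primeFactors).card ≤ ({2} : Finset ℕ).card + n.primeFactors.card :=
        Finset.card_union_le _ _
    _ = 1 + n.primeFactors.card := by simp

lemma aux_cm_re (a b : ℤ) (ha : a ≠ 0) (r : ℝ) :
    (((b:ℂ) + Complex.I*(r:ℝ))/(2*(a:ℂ))).re = b/(2*a) := by
  have h : (2*(a:ℂ)) = (((2*(a:ℝ) : ℝ)) : ℂ) := by push_cast; ring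
  rw [h, Complex.div_ofReal_re]
  simp

lemma aux_cm_im (a b : ℤ) (ha : a ≠ 0) (r : ℝ) :
    (((b:ℂ) + Complex.I*(r:ℝ))/(2*(a:ℂ))).im = r/(2*a) := by
  have h : (2*(a:ℂ)) = (((2*(a:ℝ) : ℝ)) : ℂ) := by push_cast; ring
  rw [h, Complex.div_ofReal_im]
  simp




lemma aux_num1 : (256:ℝ)/11 ≤ (48+16*Real.sqrt 3)/3 := by
  nlinarith [Real.sq_sqrt (by norm_num : (0:ℝ) ≤ 3), Real.sqrt_nonneg 3]

lemma aux_num2 : (32:ℝ)/11 ≤ (12+4*Real.sqrt 3)/3 := by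
  nlinarith [Real.sqrt_nonneg 3]

set_option maxHeartbeats 2000000 in
/-- The counting bound for `C_ε(τ,Δ)`, Theorem 3.1. -/
theorem stmt6 (Δ D : ℤ) (f : ℕ) (hf : 0 < f) (hΔneg : Δ < 0)
    (hΔmod : Δ % 4 = 0 ∨ Δ % 4 = 1)
    (hfact : Δ = (f : ℤ) ^ 2 * D) (hD : IsFundDisc D)
    (ftilde : ℕ) (hft1 : D % 4 = 1 → ftilde = f) (hft0 : D % 4 = 0 → ftilde = 2 * f)
    (τ : ℂ) (hτ : inFundDomain τ) (hτCM : ∃ Δ' : ℤ, IsCMOfDisc Δ' τ)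
    (ε : ℝ) (hε0 : 0 < ε) (hε : ε < 1 / 4) :
    (Nat.card {z : ℂ | IsCMOfDisc Δ z ∧ ‖z - τ‖ < ε} : ℝ) ≤
      (Fmax Δ : ℝ) *
        ((48 + 16 * Real.sqrt 3) / 3 * (((ArithmeticFunction.sigma 1) ftilde : ℝ) / (ftilde : ℝ)) *
            Real.sqrt |(Δ : ℝ)| * ε ^ 2 +
          (12 + 4 * Real.sqrt 3) / 3 * Real.sqrt |(Δ : ℝ)| * ε +
          8 * |(Δ : ℝ)| ^ ((1 : ℝ) / 4) / Real.sqrt (Real.sqrt 3 - 1) *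
            ((ArithmeticFunction.sigma 0) ftilde : ℝ) * ε +
          2) := by
  classical
  obtain ⟨htpos, habs, hre2⟩ := hτ
  set S := {z : ℂ | IsCMOfDisc Δ z ∧ ‖z - τ‖ < ε} with hSdef
  set sq := Real.sqrt |(Δ:ℝ)| with hsq
  set t := τ.im with htdef
  set x := τ.re with hxdef
  -- basic numerics
  have hΔ3 : Δ ≤ -3 := by rcases hΔmod with h | h <;> omega
  have hΔabs : |(Δ:ℝ)| = ((Δ.natAbs : ℕ) : ℝ) := by
    rw [Nat.cast_natAbs, Int.cast_abs]
  have hΔnat3 : (3:ℕ) ≤ Δ.natAbs := by omega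
  have hΔ3r : (3:ℝ) ≤ |(Δ:ℝ)| := by rw [hΔabs]; exact_mod_cast hΔnat3
  have hsqpos : 0 < sq := Real.sqrt_pos.mpr (by linarith)
  have hsq2 : sq^2 = |(Δ:ℝ)| := Real.sq_sqrt (by linarith)
  have h3 : (Real.sqrt 3)^2 = 3 := Real.sq_sqrt (by norm_num)
  have h3nn : 0 ≤ Real.sqrt 3 := Real.sqrt_nonneg 3
  have h31 : 1 < Real.sqrt 3 := by nlinarith
  have h32 : Real.sqrt 3 ≤ 2 := by nlinarith
  have ht2 : 3/4 ≤ t^2 := by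
    have hnorm : (‖τ‖)^2 = x^2 + t^2 := by
      rw [Complex.sq_norm, Complex.normSq_apply, ← hxdef, ← htdef]; ring
    have h1 : (1:ℝ) ≤ (‖τ‖)^2 := by nlinarith [norm_nonneg τ]
    have h2 : x^2 ≤ 1/4 := by
      have := abs_le.mp hre2
      nlinarith
    nlinarith
  have hts : Real.sqrt 3 / 2 ≤ t := by
    have h1 : Real.sqrt (3/4) ≤ Real.sqrt (t^2) := Real.sqrt_le_sqrt ht2
    rw [Real.sqrt_sq htpos.le] at h1
    have h2 : Real.sqrt (3/4) = Real.sqrt 3 / 2 := by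
      rw [show (3:ℝ)/4 = (Real.sqrt 3/2)^2 by rw [div_pow, h3]; norm_num,
        Real.sqrt_sq (by positivity)]
    linarith
  have htε : 0 < t - ε := by nlinarith
  have h2tme : Real.sqrt 3 - 1/2 ≤ 2*(t-ε) := by nlinarith
  have htpe : 0 < t + ε := by linarith
  set α := sq/(2*(t+ε)) with hα
  set β := sq/(2*(t-ε)) with hβ
  have hβpos : 0 < β := div_pos hsqpos (by linarith)
  have hαpos : 0 < α := div_pos hsqpos (by linarith)
  have hαβ : α ≤ β := by
    apply div_le_div_of_nonneg_left hsqpos.le (by linarith) (by linarith)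
  have hL : β - α = sq*ε/(t^2-ε^2) := by
    have e1 : t - ε ≠ 0 := ne_of_gt htε
    have e2 : t + ε ≠ 0 := ne_of_gt htpe
    have e3 : t^2 - ε^2 ≠ 0 := by nlinarith
    rw [hβ, hα]
    field_simp
    ring
  have ht2ε : 11/16 ≤ t^2 - ε^2 := by nlinarith
  have hLnn : 0 ≤ β - α := by linarith
  have hLle : β - α ≤ 16/11*(sq*ε) := by
    rw [hL]
    rw [div_le_iff₀ (by linarith)]
    nlinarith [mul_nonneg hsqpos.le hε0.le]
  have hβle : β ≤ sq/(Real.sqrt 3 - 1) := by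
    rw [hβ]
    apply div_le_div_of_nonneg_left hsqpos.le (by linarith) (by linarith)
  have hβsq : β ≤ sq := by
    rw [hβ]
    apply div_le_self hsqpos.le (by nlinarith)
  have hftpos : 0 < ftilde := by
    have hD4 : D % 4 = 1 ∨ D % 4 = 0 := by
      rcases hD with ⟨h, -⟩ | ⟨m, rfl, -, -⟩
      · exact Or.inl h
      · right; omega
    rcases hD4 with h | h
    · rw [hft1 h]; omega
    · rw [hft0 h]; omega
  -- the finite sets
  set aMax : ℤ := ((Δ.natAbs).sqrt : ℤ) with haMax
  set A : Finset ℤ := (Finset.Icc 1 aMax).filter (fun a => |sq/(2*(a:ℝ)) - t| < ε) with hA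
  set row : ℤ → Finset ℤ := fun a =>
    (Finset.Icc ⌈2*(a:ℝ)*(x-ε)⌉ ⌊2*(a:ℝ)*(x+ε)⌋).filter (fun b => (4*a : ℤ) ∣ b^2 - Δ)
    with hrowdef
  set T : Finset (ℤ×ℤ) := A.biUnion (fun a => ({a} : Finset ℤ) ×ˢ row a) with hT
  set ζ : ℂ → ℤ×ℤ := fun z =>
    (round (sq/(2*z.im)), round (2*((round (sq/(2*z.im)) : ℤ):ℝ)*z.re)) with hζ
  -- membership facts for A
  have hA_mem : ∀ a ∈ A, 1 ≤ a ∧ a ≤ aMax ∧ α < (a:ℝ) ∧ (a:ℝ) < β := by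
    intro a ha
    rw [hA, Finset.mem_filter, Finset.mem_Icc] at ha
    obtain ⟨⟨h1, h2⟩, h3'⟩ := ha
    have har : (0:ℝ) < (a:ℝ) := by exact_mod_cast h1
    have habs' := abs_lt.mp h3'
    refine ⟨h1, h2, ?_, ?_⟩
    · rw [hα, div_lt_iff₀ (by linarith)]
      have : sq/(2*(a:ℝ)) < t + ε := by linarith [habs'.2]
      rw [div_lt_iff₀ (by linarith)] at this
      linarith
    · rw [hβ, lt_div_iff₀ (by linarith)]
      have : t - ε < sq/(2*(a:ℝ)) := by linarith [habs'.1]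
      rw [lt_div_iff₀ (by linarith)] at this
      linarith
  -- decomposition of CM points near τ
  have hdecomp : ∀ z ∈ S, ∃ a b : ℤ, 0 < a ∧ ((4*a : ℤ) ∣ b^2 - Δ) ∧
      z.im = sq/(2*(a:ℝ)) ∧ z.re = (b:ℝ)/(2*(a:ℝ)) := by
    intro z hz
    obtain ⟨⟨a, b, c, hapos, hgcd, hdisc, hzeq⟩, hdist⟩ := hz
    refine ⟨a, b, hapos, ⟨c, by linear_combination hdisc⟩, ?_, ?_⟩
    · rw [hzeq, ← hsq]
      have := aux_cm_im a b (by omega) sq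
      rw [this]
    · rw [hzeq]
      have := aux_cm_re a b (by omega) sq
      rw [← hsq, this]
  have hζval : ∀ z : ℂ, ∀ a b : ℤ, 0 < a → z.im = sq/(2*(a:ℝ)) → z.re = (b:ℝ)/(2*(a:ℝ)) →
      ζ z = (a, b) := by
    intro z a b hapos him hre
    have har : (0:ℝ) < (a:ℝ) := by exact_mod_cast hapos
    have h1 : sq/(2*z.im) = (a:ℝ) := by
      rw [him]
      field_simp
    rw [hζ]
    simp only [h1, round_intCast]
    have h2 : 2*((a:ℤ):ℝ)*z.re = (b:ℝ) := by
      rw [hre]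
      field_simp
    rw [h2, round_intCast]
  -- maps into T
  have hmaps : ∀ z ∈ S, ζ z ∈ T := by
    intro z hz
    obtain ⟨a, b, hapos, hdvd, him, hre⟩ := hdecomp z hz
    have hdist : ‖z - τ‖ < ε := hz.2
    have har : (0:ℝ) < (a:ℝ) := by exact_mod_cast hapos
    have himd : |sq/(2*(a:ℝ)) - t| < ε := by
      rw [← him]
      calc |z.im - t| = |(z - τ).im| := by rw [Complex.sub_im, htdef]
        _ ≤ ‖z - τ‖ := Complex.abs_im_le_norm _
        _ < ε := hdist
    have hred : |(b:ℝ)/(2*(a:ℝ)) - x| < ε := by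
      rw [← hre]
      calc |z.re - x| = |(z - τ).re| := by rw [Complex.sub_re, hxdef]
        _ ≤ ‖z - τ‖ := Complex.abs_re_le_norm _
        _ < ε := hdist
    have haβ : (a:ℝ) < β := by
      have h1 := (abs_lt.mp himd).1
      rw [hβ, lt_div_iff₀ (by linarith)]
      have : t - ε < sq/(2*(a:ℝ)) := by linarith
      rw [lt_div_iff₀ (by linarith)] at this
      linarith
    have haMax' : a ≤ aMax := by
      have h1 : (a:ℝ) ≤ sq := le_trans haβ.le hβsq
      have h2 : ((a.toNat : ℕ):ℝ) = (a:ℝ) := by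
        rw [show ((a.toNat : ℕ):ℝ) = ((a.toNat:ℤ):ℝ) by push_cast; ring,
          Int.toNat_of_nonneg (by omega)]
      have h3' : (a.toNat : ℕ) * (a.toNat : ℕ) ≤ Δ.natAbs := by
        have : ((a.toNat : ℕ):ℝ) * ((a.toNat : ℕ):ℝ) ≤ ((Δ.natAbs:ℕ):ℝ) := by
          rw [h2, ← hΔabs, ← hsq2]
          nlinarith
        exact_mod_cast this
      have h4 : (a.toNat : ℕ) ≤ (Δ.natAbs).sqrt := Nat.le_sqrt.mpr h3'
      rw [haMax]
      omega
    have hamem : a ∈ A := by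
      rw [hA, Finset.mem_filter, Finset.mem_Icc]
      exact ⟨⟨hapos, haMax'⟩, himd⟩
    have hbmem : b ∈ row a := by
      rw [hrowdef]
      simp only [Finset.mem_filter, Finset.mem_Icc]
      have h1 := abs_lt.mp hred
      constructor
      · constructor
        · apply Int.ceil_le.mpr
          have : 2*(a:ℝ)*(x-ε) < b := by
            have := h1.1
            have h2 : x - ε < (b:ℝ)/(2*(a:ℝ)) := by linarith
            rw [lt_div_iff₀ (by linarith)] at h2
            linarith
          linarith
        · apply Int.le_floor.mpr
          have : (b:ℝ) < 2*(a:ℝ)*(x+ε) := by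
            have := h1.2
            have h2 : (b:ℝ)/(2*(a:ℝ)) < x + ε := by linarith
            rw [div_lt_iff₀ (by linarith)] at h2
            linarith
          linarith
      · exact hdvd
    rw [hζval z a b hapos him hre, hT]
    rw [Finset.mem_biUnion]
    exact ⟨a, hamem, by simp [hbmem]⟩
  -- injectivity
  have hinj : Set.InjOn ζ S := by
    intro z hz z' hz' heq
    obtain ⟨a, b, hapos, -, him, hre⟩ := hdecomp z hz
    obtain ⟨a', b', hapos', -, him', hre'⟩ := hdecomp z' hz'
    rw [hζval z a b hapos him hre, hζval z' a' b' hapos' him' hre'] at heq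
    have h1 : a = a' := congrArg Prod.fst heq
    have h2 : b = b' := congrArg Prod.snd heq
    subst h1
    subst h2
    apply Complex.ext
    · rw [hre, hre']
    · rw [him, him']
  -- cardinality chain
  have hcard1 : (Nat.card S : ℝ) ≤ (T.card : ℝ) := by
    have h : Nat.card S ≤ T.card := by
      rw [Nat.card_coe_set_eq]
      have hSsub : ζ '' S ⊆ (T : Set (ℤ×ℤ)) := by
        rintro _ ⟨z, hz, rfl⟩
        exact hmaps z hz
      calc S.ncard = (ζ '' S).ncard := (Set.ncard_image_of_injOn hinj).symm
        _ ≤ (↑T : Set (ℤ×ℤ)).ncard := Set.ncard_le_ncard hSsub (T.finite_toSet)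
        _ = T.card := Set.ncard_coe_finset T
    exact_mod_cast h
  have hTsum : (T.card : ℝ) ≤ ∑ a ∈ A, ((row a).card : ℝ) := by
    have h := Finset.card_biUnion_le (s := A) (t := fun a => ({a} : Finset ℤ) ×ˢ row a)
    have h2 : ∀ a : ℤ, (({a} : Finset ℤ) ×ˢ row a).card = (row a).card := by
      intro a
      rw [Finset.card_product, Finset.card_singleton, one_mul]
    have h3' : T.card ≤ ∑ a ∈ A, (row a).card := by
      calc T.card ≤ ∑ a ∈ A, (({a} : Finset ℤ) ×ˢ row a).card := h
        _ = ∑ a ∈ A, (row a).card := Finset.sum_congr rfl (fun a _ => h2 a)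
    calc (T.card : ℝ) ≤ ((∑ a ∈ A, (row a).card : ℕ) : ℝ) := by exact_mod_cast h3'
      _ = ∑ a ∈ A, ((row a).card : ℝ) := by push_cast; ring
  -- the choice of g for each a
  set Fm : ℝ := (Fmax Δ : ℝ) with hFm
  have hFmnn : 0 ≤ Fm := by rw [hFm]; positivity
  have hGex : ∀ a : ℤ, ∃ g : ℕ, a ∈ A → (0 < g ∧ g ∣ ftilde ∧ (g^2 ∣ 4*a.toNat) ∧
      ((row a).card : ℝ) ≤ 2*Fm*(2*(g:ℝ)*ε + 1)) := by
    intro a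
    by_cases ha : a ∈ A
    · obtain ⟨h1a, h2a, h3a, h4a⟩ := hA_mem a ha
      have hapos : (0:ℤ) < a := h1a
      have har : (0:ℝ) < (a:ℝ) := by exact_mod_cast hapos
      have hna : 0 < a.toNat := by omega
      have hcast : ((a.toNat : ℕ) : ℝ) = (a:ℝ) := by
        rw [show ((a.toNat : ℕ):ℝ) = ((a.toNat:ℤ):ℝ) by push_cast; ring,
          Int.toNat_of_nonneg (by omega)]
      obtain ⟨g, hg0, hgft, hg2, hbound⟩ := aux_row Δ D f ftilde hf hΔneg hfact hD hft1 hft0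
        hftpos a.toNat hna (2*(a:ℝ)*(x-ε)) (2*(a:ℝ)*(x+ε)) (by nlinarith) (row a) (by
          intro b hb
          rw [hrowdef] at hb
          simp only [Finset.mem_filter, Finset.mem_Icc] at hb
          refine ⟨?_, ?_, ?_⟩
          · calc 2*(a:ℝ)*(x-ε) ≤ (⌈2*(a:ℝ)*(x-ε)⌉ : ℝ) := Int.le_ceil _
              _ ≤ (b:ℝ) := by exact_mod_cast hb.1.1
          · calc (b:ℝ) ≤ (⌊2*(a:ℝ)*(x+ε)⌋ : ℝ) := by exact_mod_cast hb.1.2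
              _ ≤ 2*(a:ℝ)*(x+ε) := Int.floor_le _
          · rw [show ((a.toNat : ℕ):ℤ) = a from Int.toNat_of_nonneg (by omega)]
            exact hb.2)
      refine ⟨g, fun _ => ⟨hg0, hgft, hg2, ?_⟩⟩
      have hlen : (2*(a:ℝ)*(x+ε) - 2*(a:ℝ)*(x-ε)) * (2*(g:ℝ)) / (4*((a.toNat:ℕ):ℝ))
          = 2*(g:ℝ)*ε := by
        rw [hcast]
        field_simp
        ring
      rw [hlen] at hbound
      have hω : ((2:ℕ)^((4*a.toNat).primeFactors.card) : ℝ) ≤ 2*Fm := by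
        have hω1 : (2:ℕ)^((4*a.toNat).primeFactors.card) ≤ 2^(1 + (a.toNat).primeFactors.card) :=
          Nat.pow_le_pow_right (by norm_num) (aux_pf4 a.toNat hna.ne')
        have hω2 : (2:ℕ)^((a.toNat).primeFactors.card) ≤ Fmax Δ := by
          apply Finset.le_sup (f := fun n : ℕ => 2^n.primeFactors.card)
          rw [Finset.mem_Icc]
          constructor
          · omega
          · rw [haMax] at h2a; omega
        calc ((2:ℕ)^((4*a.toNat).primeFactors.card) : ℝ)
            ≤ ((2^(1 + (a.toNat).primeFactors.card) : ℕ) : ℝ) := by exact_mod_cast hω1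
          _ = 2 * ((2:ℕ)^((a.toNat).primeFactors.card) : ℝ) := by
              push_cast [pow_add]; ring
          _ ≤ 2*Fm := by
              rw [hFm]
              have : ((2:ℕ)^((a.toNat).primeFactors.card) : ℝ) ≤ (Fmax Δ : ℝ) := by
                exact_mod_cast hω2
              linarith
      calc ((row a).card : ℝ) ≤ (2:ℕ)^((4*a.toNat).primeFactors.card) * (2*(g:ℝ)*ε + 1) := by
            exact_mod_cast hbound
        _ ≤ 2*Fm*(2*(g:ℝ)*ε + 1) := by
            apply mul_le_mul_of_nonneg_right hω (by positivity)
    · exact ⟨1, fun h => absurd h ha⟩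
  choose G hG using hGex
  -- sum over rows
  have hsum1 : ∑ a ∈ A, ((row a).card:ℝ) ≤ 4*Fm*ε*(∑ a ∈ A, ((G a):ℝ)) + 2*Fm*(A.card) := by
    calc ∑ a ∈ A, ((row a).card:ℝ) ≤ ∑ a ∈ A, (4*Fm*ε*((G a):ℝ) + 2*Fm) := by
          apply Finset.sum_le_sum
          intro a ha
          have hrc := ((hG a) ha).2.2.2
          calc ((row a).card:ℝ) ≤ 2*Fm*(2*((G a):ℝ)*ε + 1) := hrc
            _ = 4*Fm*ε*((G a):ℝ) + 2*Fm := by ring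
      _ = 4*Fm*ε*(∑ a ∈ A, ((G a):ℝ)) + 2*Fm*(A.card) := by
          rw [Finset.sum_add_distrib, ← Finset.mul_sum, Finset.sum_const, nsmul_eq_mul]
          ring
  -- fiberwise sum over divisors of ftilde
  have hGsum : ∑ a ∈ A, ((G a):ℝ) ≤
      4*(β-α)*(((ArithmeticFunction.sigma 1) ftilde : ℝ)/(ftilde:ℝ))
        + 2*Real.sqrt β * ((ArithmeticFunction.sigma 0) ftilde : ℝ) := by
    have hfibmap : ∀ a ∈ A, G a ∈ ftilde.divisors := fun a ha =>
      Nat.mem_divisors.mpr ⟨((hG a) ha).2.1, hftpos.ne'⟩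
    have hsplit : ∑ a ∈ A, ((G a):ℝ)
        = ∑ d ∈ ftilde.divisors, ∑ a ∈ A.filter (fun a => G a = d), ((G a):ℝ) :=
      (Finset.sum_fiberwise_of_maps_to hfibmap _).symm
    have hper : ∀ d ∈ ftilde.divisors,
        ∑ a ∈ A.filter (fun a => G a = d), ((G a):ℝ) ≤ 4*(β-α)/d + 2*Real.sqrt β := by
      intro d hd
      have hd1 : 0 < d := Nat.pos_of_mem_divisors hd
      have hdr : (0:ℝ) < d := by exact_mod_cast hd1
      set Ad := A.filter (fun a => G a = d) with hAd
      have hsum_eq : ∑ a ∈ Ad, ((G a):ℝ) = (Ad.card : ℝ) * d := by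
        have hcongr : ∀ a ∈ Ad, ((G a):ℝ) = (d:ℝ) := fun a ha => by
          rw [(Finset.mem_filter.mp ha).2]
        rw [Finset.sum_congr rfl hcongr, Finset.sum_const, nsmul_eq_mul]
      rcases Finset.eq_empty_or_nonempty Ad with he | hne
      · rw [he]
        simp only [Finset.sum_empty]
        have h1 : (0:ℝ) ≤ 4*(β-α)/d := div_nonneg (by linarith only [hLnn]) hdr.le
        have h2 : (0:ℝ) ≤ 2*Real.sqrt β := by positivity
        linarith only [h1, h2]
      · obtain ⟨a₀, ha₀⟩ := hne
        have ha₀A := Finset.mem_filter.mp ha₀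
        have hga₀ := (hG a₀) ha₀A.1
        have hGa₀d : G a₀ = d := ha₀A.2
        have h5a₀ := hA_mem a₀ ha₀A.1
        have ha₀pos : (0:ℤ) < a₀ := h5a₀.1
        have hd2a : (d:ℝ)^2 ≤ 4*β := by
          have h1 : d^2 ∣ 4*a₀.toNat := hGa₀d ▸ hga₀.2.2.1
          have h2 : (d^2 : ℕ) ≤ 4*a₀.toNat := Nat.le_of_dvd (by omega) h1
          have h3' : ((a₀.toNat:ℕ):ℝ) = (a₀:ℝ) := by
            rw [show ((a₀.toNat : ℕ):ℝ) = ((a₀.toNat:ℤ):ℝ) by push_cast; ring,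
              Int.toNat_of_nonneg (by omega)]
          have h4 : (a₀:ℝ) < β := h5a₀.2.2.2
          have h2' : ((d:ℝ))^2 ≤ 4*((a₀.toNat:ℕ):ℝ) := by exact_mod_cast h2
          rw [h3'] at h2'
          linarith only [h2', h4]
        have hd2β : (d:ℝ) ≤ 2*Real.sqrt β := by
          calc (d:ℝ) = Real.sqrt ((d:ℝ)^2) := (Real.sqrt_sq (by positivity)).symm
            _ ≤ Real.sqrt (4*β) := Real.sqrt_le_sqrt hd2a
            _ = 2*Real.sqrt β := by
                rw [show (4:ℝ)*β = 2^2*β by ring, Real.sqrt_mul (by positivity) β,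
                  Real.sqrt_sq (by norm_num)]
        set m := d^2 / Nat.gcd (d^2) 4 with hm
        have hgcd4 : Nat.gcd (d^2) 4 ∣ d^2 := Nat.gcd_dvd_left _ _
        have hgcdle : Nat.gcd (d^2) 4 ≤ 4 := Nat.le_of_dvd (by norm_num) (Nat.gcd_dvd_right _ _)
        have hgcdpos : 0 < Nat.gcd (d^2) 4 := Nat.gcd_pos_of_pos_right _ (by norm_num)
        have hmpos : 0 < m := Nat.div_pos (Nat.le_of_dvd (by positivity) hgcd4) hgcdpos
        have hm4 : (d:ℝ)^2 ≤ 4*(m:ℝ) := by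
          have hn : d^2 ≤ 4*m := by
            have hmm : m * Nat.gcd (d^2) 4 = d^2 := Nat.div_mul_cancel hgcd4
            calc d^2 = m * Nat.gcd (d^2) 4 := hmm.symm
              _ ≤ m*4 := Nat.mul_le_mul_left m hgcdle
              _ = 4*m := by ring
          exact_mod_cast hn
        have hcardAd : (Ad.card : ℝ) ≤ (β-α)/m + 1 := by
          apply aux_card_int_ap Ad α β m hmpos 0 ?_ hαβ
          intro a ha
          have haA := Finset.mem_filter.mp ha
          have h5 := hA_mem a haA.1
          refine ⟨h5.2.2.1.le, h5.2.2.2.le, ?_⟩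
          have h6 : m ∣ a.toNat := aux_div4 d a.toNat (haA.2 ▸ ((hG a) haA.1).2.2.1)
          have h7 : (m:ℤ) ∣ (a.toNat : ℤ) := Int.natCast_dvd_natCast.mpr h6
          rw [Int.toNat_of_nonneg (by omega : (0:ℤ) ≤ a)] at h7
          simpa using h7
        rw [hsum_eq]
        calc (Ad.card : ℝ) * d ≤ ((β-α)/m + 1)*d :=
            mul_le_mul_of_nonneg_right hcardAd hdr.le
          _ = (β-α)*d/m + d := by
              field_simp
          _ ≤ 4*(β-α)/d + 2*Real.sqrt β := by
              have hA1 : (β-α)*d/m ≤ 4*(β-α)/d := by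
                rw [div_le_div_iff₀ (by exact_mod_cast hmpos) hdr]
                have h0 : (β-α)*((d:ℝ)^2) ≤ (β-α)*(4*(m:ℝ)) :=
                  mul_le_mul_of_nonneg_left hm4 hLnn
                calc (β-α)*(d:ℝ)*(d:ℝ) = (β-α)*((d:ℝ)^2) := by ring
                  _ ≤ (β-α)*(4*(m:ℝ)) := h0
                  _ = 4*(β-α)*(m:ℝ) := by ring
              linarith only [hA1, hd2β]
    rw [hsplit]
    calc ∑ d ∈ ftilde.divisors, ∑ a ∈ A.filter (fun a => G a = d), ((G a):ℝ)
        ≤ ∑ d ∈ ftilde.divisors, (4*(β-α)/d + 2*Real.sqrt β) := Finset.sum_le_sum hper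
      _ = 4*(β-α)*(∑ d ∈ ftilde.divisors, (1:ℝ)/d)
          + (ftilde.divisors.card : ℝ) * (2*Real.sqrt β) := by
          rw [Finset.sum_add_distrib, Finset.sum_const, nsmul_eq_mul, Finset.mul_sum]
          congr 1
          apply Finset.sum_congr rfl
          intro d hd
          ring
      _ = 4*(β-α)*(((ArithmeticFunction.sigma 1) ftilde : ℝ)/(ftilde:ℝ))
          + 2*Real.sqrt β * ((ArithmeticFunction.sigma 0) ftilde : ℝ) := by
          rw [aux_sum_inv_divisors ftilde hftpos.ne', ArithmeticFunction.sigma_zero_apply]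
          push_cast
          ring

  -- size of A
  have hAcard : ((A.card):ℝ) ≤ (β - α) + 1 :=
    aux_card_int_interval A α β
      (fun a ha => ⟨(hA_mem a ha).2.2.1.le, (hA_mem a ha).2.2.2.le⟩) hαβ
  -- final assembly
  set σ1r : ℝ := ((ArithmeticFunction.sigma 1) ftilde : ℝ)/(ftilde:ℝ) with hσ1
  have hσ1nn : 0 ≤ σ1r := by
    rw [hσ1]
    positivity
  set σ0r : ℝ := ((ArithmeticFunction.sigma 0) ftilde : ℝ) with hσ0
  have hσ0nn : 0 ≤ σ0r := by
    rw [hσ0]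
    positivity
  have hchain : (Nat.card S : ℝ) ≤
      Fm*(16*(β-α)*ε*σ1r + 8*ε*Real.sqrt β*σ0r + 2*(β-α) + 2) := by
    have h4Fmε : (0:ℝ) ≤ 4*Fm*ε := by
      have := mul_nonneg (mul_nonneg (by norm_num : (0:ℝ) ≤ 4) hFmnn) hε0.le
      linarith
    have h2Fm : (0:ℝ) ≤ 2*Fm := by linarith
    calc (Nat.card S:ℝ) ≤ (T.card:ℝ) := hcard1
      _ ≤ ∑ a ∈ A, ((row a).card:ℝ) := hTsum
      _ ≤ 4*Fm*ε*(∑ a ∈ A, ((G a):ℝ)) + 2*Fm*(A.card) := hsum1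
      _ ≤ 4*Fm*ε*(4*(β-α)*σ1r + 2*Real.sqrt β*σ0r) + 2*Fm*((β-α)+1) := by
          apply add_le_add
          · exact mul_le_mul_of_nonneg_left hGsum h4Fmε
          · exact mul_le_mul_of_nonneg_left hAcard h2Fm
      _ = Fm*(16*(β-α)*ε*σ1r + 8*ε*Real.sqrt β*σ0r + 2*(β-α) + 2) := by ring
  have hT1 : 16*(β-α)*ε*σ1r ≤ (48+16*Real.sqrt 3)/3 * σ1r * sq * ε^2 := by
    have h256 : (256:ℝ)/11 ≤ (48+16*Real.sqrt 3)/3 := aux_num1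
    have h1 : 16*(β-α)*ε ≤ 256/11*(sq*ε^2) := by
      have h0 : (β-α)*ε ≤ (16/11*(sq*ε))*ε := mul_le_mul_of_nonneg_right hLle hε0.le
      calc 16*(β-α)*ε = 16*((β-α)*ε) := by ring
        _ ≤ 16*((16/11*(sq*ε))*ε) := by linarith only [h0]
        _ = 256/11*(sq*ε^2) := by ring
    calc 16*(β-α)*ε*σ1r ≤ (256/11*(sq*ε^2))*σ1r := by
          apply mul_le_mul_of_nonneg_right h1 hσ1nn
      _ ≤ ((48+16*Real.sqrt 3)/3*(sq*ε^2))*σ1r := by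
          apply mul_le_mul_of_nonneg_right ?_ hσ1nn
          apply mul_le_mul_of_nonneg_right h256
          positivity
      _ = (48+16*Real.sqrt 3)/3 * σ1r * sq * ε^2 := by ring
  have hT2 : 2*(β-α) ≤ (12+4*Real.sqrt 3)/3 * sq * ε := by
    have h32' : (32:ℝ)/11 ≤ (12+4*Real.sqrt 3)/3 := aux_num2
    calc 2*(β-α) ≤ 2*(16/11*(sq*ε)) := by linarith only [hLle]
      _ = 32/11*(sq*ε) := by ring
      _ ≤ (12+4*Real.sqrt 3)/3*(sq*ε) := by
          apply mul_le_mul_of_nonneg_right h32'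
          positivity
      _ = (12+4*Real.sqrt 3)/3 * sq * ε := by ring
  have hT3 : 8*ε*Real.sqrt β*σ0r ≤
      8*|(Δ:ℝ)|^((1:ℝ)/4)/Real.sqrt (Real.sqrt 3 - 1) * σ0r * ε := by
    have hsb : Real.sqrt β ≤ |(Δ:ℝ)|^((1:ℝ)/4)/Real.sqrt (Real.sqrt 3 - 1) := by
      have h1 : Real.sqrt β ≤ Real.sqrt (sq/(Real.sqrt 3 - 1)) := Real.sqrt_le_sqrt hβle
      have h2 : Real.sqrt (sq/(Real.sqrt 3 - 1)) = Real.sqrt sq / Real.sqrt (Real.sqrt 3 - 1) :=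
        Real.sqrt_div hsqpos.le _
      have h3' : Real.sqrt sq = |(Δ:ℝ)|^((1:ℝ)/4) := by
        rw [hsq, Real.sqrt_eq_rpow, Real.sqrt_eq_rpow, ← Real.rpow_mul (abs_nonneg _)]
        norm_num
      rw [h2, h3'] at h1
      exact h1
    calc 8*ε*Real.sqrt β*σ0r ≤ 8*ε*(|(Δ:ℝ)|^((1:ℝ)/4)/Real.sqrt (Real.sqrt 3 - 1))*σ0r := by
          apply mul_le_mul_of_nonneg_right ?_ hσ0nn
          apply mul_le_mul_of_nonneg_left hsb
          positivity
      _ = 8*|(Δ:ℝ)|^((1:ℝ)/4)/Real.sqrt (Real.sqrt 3 - 1) * σ0r * ε := by ring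
  calc (Nat.card S : ℝ) ≤ Fm*(16*(β-α)*ε*σ1r + 8*ε*Real.sqrt β*σ0r + 2*(β-α) + 2) := hchain
    _ ≤ Fm*((48+16*Real.sqrt 3)/3*σ1r*sq*ε^2 + (12+4*Real.sqrt 3)/3*sq*ε
          + 8*|(Δ:ℝ)|^((1:ℝ)/4)/Real.sqrt (Real.sqrt 3 - 1)*σ0r*ε + 2) := by
        apply mul_le_mul_of_nonneg_left ?_ hFmnn
        linarith only [hT1, hT2, hT3]
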